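/- Let R = q^{2m} with m ∈ ℤ and let a ∈ ℚ_q. With P := {(ξ,η) ∈ ℚ_q² : |ξ − a| ≤ R^{-1/2}, |η − ξ²| ≤ R^{-1}} and T := {(x,y) ∈ ℚ_q² : |x + 2ay| ≤ R^{1/2}, |y| ≤ R}, one has for every (x,y) ∈ ℚ_q²: ∫_{P} χ(ξx + ηy) dμ²(ξ,η) = R^{-3/2} χ(ax + a²y) · 1_T(x,y). -/

import Mathlib

open MeasureTheory

noncomputable instance (q : ℕ) [Fact q.Prime] : MeasurableSpace ℚ_[q] := borel _
instance (q : ℕ) [Fact q.Prime] : BorelSpace ℚ_[q] := ⟨rfl⟩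

open MeasureTheory Set
open scoped NNReal ENNReal

namespace IFP
set_option maxHeartbeats 1000000
variable {q : ℕ} [hq : Fact q.Prime]

instance : TopologicalSpace.SeparableSpace ℚ_[q] := by
  constructor
  refine ⟨Set.range ((↑) : ℚ → ℚ_[q]), Set.countable_range _, ?_⟩
  have : DenseRange ((↑) : ℚ → ℚ_[q]) := by
    rw [Metric.denseRange_iff]
    intro x ε hε
    obtain ⟨r, hr⟩ := Padic.rat_dense (p := q) x hε
    exact ⟨r, by rwa [dist_eq_norm]⟩
  exact this

def qb (q : ℕ) [Fact q.Prime] (k : ℤ) : Set ℚ_[q] := {x | ‖x‖ ≤ (q:ℝ)^k}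

lemma mem_qb {k : ℤ} {x : ℚ_[q]} : x ∈ qb q k ↔ ‖x‖ ≤ (q:ℝ)^k := Iff.rfl

lemma oneltq : 1 < (q:ℝ) := by exact_mod_cast hq.out.one_lt
lemma qpos : (0:ℝ) < q := by exact_mod_cast hq.out.pos
lemma qne : (q:ℝ) ≠ 0 := ne_of_gt qpos

lemma measurableSet_qb (k : ℤ) : MeasurableSet (qb q k) :=
  (isClosed_le continuous_norm continuous_const).measurableSet

lemma qb_add {k : ℤ} {x y : ℚ_[q]} (hx : x ∈ qb q k) (hy : y ∈ qb q k) : x + y ∈ qb q k :=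
  le_trans (Padic.nonarchimedean x y) (max_le hx hy)

lemma qb_neg {k : ℤ} {x : ℚ_[q]} (hx : x ∈ qb q k) : -x ∈ qb q k := by
  simpa [mem_qb] using hx

/-- translated preimage of a ball by an element of the ball is the ball -/
lemma qb_preimage_add {k : ℤ} {u₀ : ℚ_[q]} (h : u₀ ∈ qb q k) :
    (fun x => x + u₀) ⁻¹' qb q k = qb q k := by
  ext x
  constructor
  · intro hx
    have : x + u₀ + -u₀ ∈ qb q k := qb_add hx (qb_neg h)
    simpa using this
  · intro hx; exact qb_add hx h

lemma qb_decomp (k : ℤ) :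
    qb q (k+1) = ⋃ c ∈ Finset.range q, (fun x => x - (c : ℚ_[q]) * (q:ℚ_[q])^(-(k+1))) ⁻¹' qb q k := by
  have hqz : (q:ℚ_[q]) ≠ 0 := by exact_mod_cast (Nat.cast_ne_zero.2 hq.out.ne_zero)
  have hz1 : (q:ℚ_[q])^(k+1) * (q:ℚ_[q])^(-(k+1)) = 1 := by
    rw [← zpow_add₀ hqz, add_neg_cancel, zpow_zero]
  ext x
  simp only [Set.mem_iUnion, Set.mem_preimage, Finset.mem_range, exists_prop]
  constructor
  · intro hx
    have hz : ‖x * (q:ℚ_[q])^(k+1)‖ ≤ 1 := by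
      rw [norm_mul, Padic.norm_p_zpow]
      calc ‖x‖ * (q:ℝ)^(-(k+1)) ≤ (q:ℝ)^(k+1) * (q:ℝ)^(-(k+1)) := by
            apply mul_le_mul_of_nonneg_right hx (by positivity)
        _ = 1 := by rw [← zpow_add₀ qne, add_neg_cancel, zpow_zero]
    set z : ℤ_[q] := ⟨x * (q:ℚ_[q])^(k+1), hz⟩ with hzdef
    refine ⟨z.appr 1, by simpa using z.appr_lt 1, ?_⟩
    have hspec : ‖z - (z.appr 1 : ℤ_[q])‖ ≤ (q:ℝ)^(-(1:ℕ):ℤ) := by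
      rw [PadicInt.norm_le_pow_iff_mem_span_pow]
      simpa using PadicInt.appr_spec 1 z
    have hcoe : ‖(z : ℚ_[q]) - ((z.appr 1 : ℕ) : ℚ_[q])‖ ≤ (q:ℝ)^(-(1:ℤ)) := by
      rw [← PadicInt.padic_norm_e_of_padicInt] at hspec
      push_cast at hspec ⊢
      exact hspec
    have hx' : x - ((z.appr 1 : ℕ) : ℚ_[q]) * (q:ℚ_[q])^(-(k+1))
        = ((z : ℚ_[q]) - ((z.appr 1 : ℕ) : ℚ_[q])) * (q:ℚ_[q])^(-(k+1)) := by
      have : (z : ℚ_[q]) = x * (q:ℚ_[q])^(k+1) := rfl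
      rw [sub_mul, this, mul_assoc, hz1, mul_one]
    rw [mem_qb, hx']
    calc ‖((z : ℚ_[q]) - ((z.appr 1 : ℕ) : ℚ_[q])) * (q:ℚ_[q])^(-(k+1))‖
        = ‖(z : ℚ_[q]) - ((z.appr 1 : ℕ) : ℚ_[q])‖ * (q:ℝ)^(k+1) := by
          rw [norm_mul, Padic.norm_p_zpow, neg_neg]
      _ ≤ (q:ℝ)^(-(1:ℤ)) * (q:ℝ)^(k+1) := by
          apply mul_le_mul_of_nonneg_right hcoe (by positivity)
      _ = (q:ℝ)^k := by rw [← zpow_add₀ qne]; congr 1; ring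
  · rintro ⟨c, hc, hmem⟩
    rw [mem_qb] at hmem ⊢
    have hc1 : ‖(c : ℚ_[q]) * (q:ℚ_[q])^(-(k+1))‖ ≤ (q:ℝ)^(k+1) := by
      rw [norm_mul, Padic.norm_p_zpow, neg_neg]
      have hnc : ‖(c : ℚ_[q])‖ ≤ 1 := by
        simpa using Padic.norm_int_le_one (p := q) (c:ℤ)
      calc ‖(c : ℚ_[q])‖ * (q:ℝ)^(k+1) ≤ 1 * (q:ℝ)^(k+1) := by
            apply mul_le_mul_of_nonneg_right hnc (by positivity)
        _ = (q:ℝ)^(k+1) := one_mul _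

    have : x = (x - (c : ℚ_[q]) * (q:ℚ_[q])^(-(k+1))) + (c : ℚ_[q]) * (q:ℚ_[q])^(-(k+1)) := by ring
    rw [this]
    refine le_trans (Padic.nonarchimedean _ _) (max_le ?_ hc1)
    calc ‖x - (c : ℚ_[q]) * (q:ℚ_[q])^(-(k+1))‖ ≤ (q:ℝ)^k := hmem
      _ ≤ (q:ℝ)^(k+1) := by
          apply zpow_le_zpow_right₀ (le_of_lt oneltq) (by omega)

lemma norm_sub_le_max (a b : ℚ_[q]) : ‖a - b‖ ≤ max ‖a‖ ‖b‖ := by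
  rw [sub_eq_add_neg]
  refine le_trans (Padic.nonarchimedean a (-b)) ?_
  simp

lemma qb_decomp_disjoint (k : ℤ) :
    (↑(Finset.range q) : Set ℕ).PairwiseDisjoint
      (fun c : ℕ => (fun x : ℚ_[q] => x - (c : ℚ_[q]) * (q:ℚ_[q])^(-(k+1))) ⁻¹' qb q k) := by
  intro c hc c' hc' hne
  simp only [Finset.coe_range, Set.mem_Iio] at hc hc'
  rw [Function.onFun, Set.disjoint_left]
  intro x hx hx'
  simp only [Set.mem_preimage, mem_qb] at hx hx'
  have hdiff : ‖((c' : ℚ_[q]) - c) * (q:ℚ_[q])^(-(k+1))‖ ≤ (q:ℝ)^k := by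
    have heq : ((c' : ℚ_[q]) - c) * (q:ℚ_[q])^(-(k+1))
        = (x - (c : ℚ_[q]) * (q:ℚ_[q])^(-(k+1))) - (x - (c' : ℚ_[q]) * (q:ℚ_[q])^(-(k+1))) := by
      ring
    rw [heq]
    exact le_trans (norm_sub_le_max _ _) (max_le hx hx')
  rw [norm_mul, Padic.norm_p_zpow, neg_neg] at hdiff
  have hql : (0:ℝ) < (q:ℝ)^(k+1) := zpow_pos qpos _
  have hnn : ‖((c' : ℚ_[q]) - c)‖ ≤ (q:ℝ)^(-(1:ℤ)) := by
    rw [← mul_le_mul_iff_of_pos_right hql, ← zpow_add₀ qne (-(1:ℤ))]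
    calc ‖((c' : ℚ_[q]) - c)‖ * (q:ℝ)^(k+1) ≤ (q:ℝ)^k := hdiff
      _ = (q:ℝ)^(-1 + (k+1)) := by congr 1; ring
  have hlt : ‖((((c' : ℤ) - (c:ℤ) : ℤ)) : ℚ_[q])‖ < 1 := by
    have h1 : (q:ℝ)^(-(1:ℤ)) < 1 := by
      rw [zpow_neg, zpow_one, inv_lt_one_iff₀]
      right; exact oneltq
    calc ‖((((c' : ℤ) - (c:ℤ) : ℤ)) : ℚ_[q])‖ = ‖((c' : ℚ_[q]) - c)‖ := by push_cast; ring_nf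
      _ ≤ (q:ℝ)^(-(1:ℤ)) := hnn
      _ < 1 := h1
  have hdvd : (q:ℤ) ∣ ((c' : ℤ) - c) := (Padic.norm_intCast_lt_one_iff).1 hlt
  have hcc : (c' : ℤ) = c := by
    rcases hdvd with ⟨d, hd⟩
    have hq0 : (0:ℤ) < q := by exact_mod_cast hq.out.pos
    have h1 : (q:ℤ) * d < q * 1 := by omega
    have h2 : (q:ℤ) * (-1) < q * d := by omega
    have hd1 : d < 1 := lt_of_mul_lt_mul_left h1 (by omega)
    have hd2 : -1 < d := lt_of_mul_lt_mul_left h2 (by omega)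
    have hd0 : d = 0 := by omega
    rw [hd0, mul_zero] at hd
    omega
  exact hne (by exact_mod_cast hcc.symm)

lemma measure_qb (μ : Measure ℚ_[q]) [μ.IsAddHaarMeasure]
    (hμ : μ {x : ℚ_[q] | ‖x‖ ≤ 1} = 1) (k : ℤ) :
    μ (qb q k) = (q:ℝ≥0∞)^k := by
  have hqE0 : ((q:ℝ≥0∞)) ≠ 0 := by
    simp only [ne_eq, Nat.cast_eq_zero]; exact hq.out.ne_zero
  have hqET : ((q:ℝ≥0∞)) ≠ ⊤ := ENNReal.natCast_ne_top q
  have hbase : μ (qb q 0) = 1 := by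
    have h0 : qb q 0 = {x : ℚ_[q] | ‖x‖ ≤ 1} := by
      ext x; simp [mem_qb]
    rw [h0, hμ]
  have hrec : ∀ j : ℤ, μ (qb q (j+1)) = q * μ (qb q j) := by
    intro j
    rw [qb_decomp j]
    rw [measure_biUnion_finset (qb_decomp_disjoint j)
      (fun c _ => (measurableSet_qb j).preimage (measurable_id.sub measurable_const))]
    have heach : ∀ c ∈ Finset.range q,
        μ ((fun x : ℚ_[q] => x - (c : ℚ_[q]) * (q:ℚ_[q])^(-(j+1))) ⁻¹' qb q j) = μ (qb q j) := by
      intro c _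
      have hfe : (fun x : ℚ_[q] => x - (c : ℚ_[q]) * (q:ℚ_[q])^(-(j+1)))
          = (fun x : ℚ_[q] => x + (-((c : ℚ_[q]) * (q:ℚ_[q])^(-(j+1))))) := by
        funext x; ring
      rw [hfe, measure_preimage_add_right]
    rw [Finset.sum_congr rfl heach, Finset.sum_const, Finset.card_range, nsmul_eq_mul]
  induction k using Int.induction_on with
  | zero => simpa using hbase
  | succ k ih =>
    rw [hrec k, ih, ENNReal.zpow_add hqE0 hqET k 1, mul_comm, zpow_one]
  | pred k ih =>
    have h1 : μ (qb q (-(k:ℤ))) = (q:ℝ≥0∞) * μ (qb q (-(k:ℤ)-1)) := by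
      have h := hrec (-(k:ℤ)-1)
      simpa using h
    have h2 : μ (qb q (-(k:ℤ)-1)) = (q:ℝ≥0∞)⁻¹ * μ (qb q (-(k:ℤ))) := by
      rw [h1, ← mul_assoc, ENNReal.inv_mul_cancel hqE0 hqET, one_mul]
    rw [h2, ih, ← zpow_neg_one (q:ℝ≥0∞), ← ENNReal.zpow_add hqE0 hqET]
    congr 1
    omega

lemma measure_qb_ne_top (μ : Measure ℚ_[q]) [μ.IsAddHaarMeasure]
    (hμ : μ {x : ℚ_[q] | ‖x‖ ≤ 1} = 1) (k : ℤ) : μ (qb q k) ≠ ⊤ := by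
  have hqE0 : ((q:ℝ≥0∞)) ≠ 0 := by
    simp only [ne_eq, Nat.cast_eq_zero]; exact hq.out.ne_zero
  rw [measure_qb μ hμ k]
  exact (ENNReal.zpow_lt_top hqE0 (ENNReal.natCast_ne_top q) k).ne

lemma measure_qb_toReal (μ : Measure ℚ_[q]) [μ.IsAddHaarMeasure]
    (hμ : μ {x : ℚ_[q] | ‖x‖ ≤ 1} = 1) (k : ℤ) : (μ (qb q k)).toReal = (q:ℝ)^k := by
  have hq0 : ((q:ℝ≥0)) ≠ 0 := by
    simp only [ne_eq, Nat.cast_eq_zero]; exact hq.out.ne_zero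
  have hc : (q:ℝ≥0∞) = ((q:ℝ≥0):ℝ≥0∞) := by norm_cast
  rw [measure_qb μ hμ k, hc, ← ENNReal.coe_zpow hq0, ENNReal.coe_toReal]
  push_cast
  ring

lemma chi_continuous (χ : ℚ_[q] → ℂ)
    (hχ_mul : ∀ x y : ℚ_[q], χ (x + y) = χ x * χ y)
    (hχ_triv : ∀ x : ℚ_[q], ‖x‖ ≤ 1 → χ x = 1) : Continuous χ := by
  apply IsLocallyConstant.continuous
  rw [IsLocallyConstant.iff_exists_open]
  intro x
  refine ⟨Metric.ball x 1, Metric.isOpen_ball, Metric.mem_ball_self one_pos, ?_⟩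
  intro y hy
  have h1 : χ y = χ x * χ (y - x) := by
    rw [← hχ_mul]; congr 1; ring
  rw [h1, hχ_triv (y - x) (le_of_lt (by rwa [Metric.mem_ball, dist_eq_norm] at hy)), mul_one]

variable (μ : Measure ℚ_[q]) [μ.IsAddHaarMeasure]
variable (χ : ℚ_[q] → ℂ)

lemma integral_char_qb_of_le
    (hμ : μ {x : ℚ_[q] | ‖x‖ ≤ 1} = 1)
    (hχ_triv : ∀ x : ℚ_[q], ‖x‖ ≤ 1 → χ x = 1)
    (k : ℤ) (t : ℚ_[q]) (ht : ‖t‖ ≤ (q:ℝ)^(-k)) :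
    ∫ u in qb q k, χ (u * t) ∂μ = (((q:ℝ)^k : ℝ) : ℂ) := by
  have h1 : ∀ u ∈ qb q k, χ (u * t) = 1 := by
    intro u hu
    apply hχ_triv
    rw [norm_mul]
    calc ‖u‖ * ‖t‖ ≤ (q:ℝ)^k * (q:ℝ)^(-k) := by
          apply mul_le_mul hu ht (norm_nonneg t) (by positivity)
      _ = 1 := by rw [← zpow_add₀ qne, add_neg_cancel, zpow_zero]
  rw [setIntegral_congr_fun (measurableSet_qb k) h1, setIntegral_const, measureReal_def,
    measure_qb_toReal μ hμ k]
  simp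

lemma integral_char_qb_of_not
    (hχ_mul : ∀ x y : ℚ_[q], χ (x + y) = χ x * χ y)
    (hχ_triv : ∀ x : ℚ_[q], ‖x‖ ≤ 1 → χ x = 1)
    (hχ_nontriv : ∃ x : ℚ_[q], ‖x‖ ≤ (q : ℝ) ∧ χ x ≠ 1)
    (k : ℤ) (t : ℚ_[q]) (ht : ¬ (‖t‖ ≤ (q:ℝ)^(-k))) :
    ∫ u in qb q k, χ (u * t) ∂μ = 0 := by
  push_neg at ht
  have ht0 : t ≠ 0 := by
    intro h0
    rw [h0, norm_zero] at ht
    exact absurd ht (not_lt.2 (le_of_lt (zpow_pos qpos _)))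
  obtain ⟨z, hzq, hz1⟩ := hχ_nontriv
  have hzgt : 1 < ‖z‖ := by
    by_contra h
    exact hz1 (hχ_triv z (not_lt.1 h))
  -- ‖t‖ ≥ q^(1-k), hence ‖t‖⁻¹ ≤ q^(k-1)
  have hval : ‖t‖ = (q:ℝ)^(-t.valuation) := Padic.norm_eq_zpow_neg_valuation ht0
  have hvk : -t.valuation ≥ 1 - k := by
    by_contra h
    push_neg at h
    have : (q:ℝ)^(-t.valuation) ≤ (q:ℝ)^(-k) :=
      zpow_le_zpow_right₀ (le_of_lt oneltq) (by omega)
    rw [← hval] at this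
    exact absurd ht (not_lt.2 this)
  have htinv : ‖t‖⁻¹ ≤ (q:ℝ)^(k-1) := by
    rw [hval, ← zpow_neg]
    exact zpow_le_zpow_right₀ (le_of_lt oneltq) (by omega)
  set u₀ : ℚ_[q] := z * t⁻¹ with hu₀def
  have hu₀ : u₀ ∈ qb q k := by
    rw [mem_qb, hu₀def, norm_mul, norm_inv]
    calc ‖z‖ * ‖t‖⁻¹ ≤ (q:ℝ) * (q:ℝ)^(k-1) := by
          apply mul_le_mul hzq htinv (by positivity) (le_of_lt qpos)
      _ = (q:ℝ)^(1+(k-1)) := by rw [zpow_add₀ qne, zpow_one]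
      _ = (q:ℝ)^k := by congr 1; ring
  have hu₀t : u₀ * t = z := by
    rw [hu₀def, mul_assoc, inv_mul_cancel₀ ht0, mul_one]
  have hpre : (fun v : ℚ_[q] => v + u₀) ⁻¹' qb q k = qb q k := qb_preimage_add hu₀
  have hshift : ∫ u in qb q k, χ ((u + u₀) * t) ∂μ = ∫ u in qb q k, χ (u * t) ∂μ := by
    have h := (measurePreserving_add_right μ u₀).setIntegral_preimage_emb
      (MeasurableEquiv.addRight u₀).measurableEmbedding (fun u => χ (u * t)) (qb q k)
    rw [hpre] at h
    exact h
  have hfac : ∫ u in qb q k, χ ((u + u₀) * t) ∂μ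
      = χ (u₀ * t) * ∫ u in qb q k, χ (u * t) ∂μ := by
    have hfe : (fun u : ℚ_[q] => χ ((u + u₀) * t)) = fun u => χ (u₀ * t) * χ (u * t) := by
      funext u
      rw [add_mul, hχ_mul, mul_comm]
    rw [hfe, integral_const_mul]
  have hzero : (χ (u₀ * t) - 1) * ∫ u in qb q k, χ (u * t) ∂μ = 0 := by
    rw [sub_mul, one_mul, ← hfac, hshift, sub_self]
  rcases mul_eq_zero.1 hzero with h | h
  · exact absurd (by rwa [hu₀t] at h : χ z - 1 = 0) (sub_ne_zero.2 hz1)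
  · exact h

lemma measure_qb_shift (μ : Measure ℚ_[q]) [μ.IsAddHaarMeasure] (v : ℚ_[q]) (k : ℤ) :
    μ {x : ℚ_[q] | ‖x - v‖ ≤ (q:ℝ)^k} = μ (qb q k) := by
  have h : {x : ℚ_[q] | ‖x - v‖ ≤ (q:ℝ)^k} = (fun x : ℚ_[q] => x + (-v)) ⁻¹' qb q k := by
    ext u; simp [mem_qb, sub_eq_add_neg]
  rw [h, measure_preimage_add_right]

lemma setIntegral_qb_shift (μ : Measure ℚ_[q]) [μ.IsAddHaarMeasure]
    (g : ℚ_[q] → ℂ) (v : ℚ_[q]) (k : ℤ) :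
    ∫ u in {x : ℚ_[q] | ‖x - v‖ ≤ (q:ℝ)^k}, g u ∂μ = ∫ u in qb q k, g (u + v) ∂μ := by
  have hpre : (fun u : ℚ_[q] => u + v) ⁻¹' {x : ℚ_[q] | ‖x - v‖ ≤ (q:ℝ)^k} = qb q k := by
    ext u; simp [mem_qb]
  have h := (measurePreserving_add_right μ v).setIntegral_preimage_emb
    (MeasurableEquiv.addRight v).measurableEmbedding g {x : ℚ_[q] | ‖x - v‖ ≤ (q:ℝ)^k}
  rw [hpre] at h
  exact h.symm

end IFP

open IFP

/-- With `R = q^{2m}`, `P = {(ξ,η) : |ξ - a| ≤ R^{-1/2}, |η - ξ²| ≤ R^{-1}}` and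
`T = {(x,y) : |x + 2ay| ≤ R^{1/2}, |y| ≤ R}`, one has
`∫_P χ(ξx + ηy) dμ²(ξ,η) = R^{-3/2} χ(ax + a²y) 1_T(x,y)`. -/
theorem inverse_fourier_parallelogram (q : ℕ) [Fact q.Prime] (hq2 : q ≠ 2)
    (μ : Measure ℚ_[q]) [μ.IsAddHaarMeasure] [SigmaFinite μ]
    (hμ : μ {x : ℚ_[q] | ‖x‖ ≤ 1} = 1)
    (χ : ℚ_[q] → ℂ)
    (hχ_mul : ∀ x y : ℚ_[q], χ (x + y) = χ x * χ y)
    (hχ_norm : ∀ x : ℚ_[q], ‖χ x‖ = 1)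
    (hχ_triv : ∀ x : ℚ_[q], ‖x‖ ≤ 1 → χ x = 1)
    (hχ_nontriv : ∃ x : ℚ_[q], ‖x‖ ≤ (q : ℝ) ∧ χ x ≠ 1)
    (m : ℤ) (a : ℚ_[q]) (x y : ℚ_[q]) :
    ∫ p in {p : ℚ_[q] × ℚ_[q] |
        ‖p.1 - a‖ ≤ (q : ℝ) ^ (-m) ∧ ‖p.2 - p.1 ^ 2‖ ≤ (q : ℝ) ^ (-(2 * m))},
        χ (p.1 * x + p.2 * y) ∂(μ.prod μ)
      = (((q : ℝ) ^ (-(3 * m)) : ℝ) : ℂ) * χ (a * x + a ^ 2 * y) *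
          Set.indicator
            {w : ℚ_[q] × ℚ_[q] | ‖w.1 + 2 * a * w.2‖ ≤ (q : ℝ) ^ m ∧ ‖w.2‖ ≤ (q : ℝ) ^ (2 * m)}
            (fun _ => (1 : ℂ)) (x, y) := by
  have hq1 : (1:ℝ) < q := oneltq
  have hqne : (q:ℝ) ≠ 0 := qne
  set f : ℚ_[q] × ℚ_[q] → ℂ := fun p => χ (p.1 * x + p.2 * y) with hfdef
  set Px : Set (ℚ_[q] × ℚ_[q]) := {p : ℚ_[q] × ℚ_[q] |
    ‖p.1 - a‖ ≤ (q : ℝ) ^ (-m) ∧ ‖p.2 - p.1 ^ 2‖ ≤ (q : ℝ) ^ (-(2 * m))} with hPdef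
  set A : Set ℚ_[q] := {ξ : ℚ_[q] | ‖ξ - a‖ ≤ (q:ℝ)^(-m)} with hAdef
  have hχ_cont : Continuous χ := chi_continuous χ hχ_mul hχ_triv
  have hf_cont : Continuous f := by
    apply hχ_cont.comp
    fun_prop
  have hAmeas : MeasurableSet A :=
    (isClosed_le (by fun_prop) continuous_const).measurableSet
  have hPmeas : MeasurableSet Px := by
    have : Px = {p : ℚ_[q] × ℚ_[q] | ‖p.1 - a‖ ≤ (q : ℝ) ^ (-m)} ∩
        {p : ℚ_[q] × ℚ_[q] | ‖p.2 - p.1 ^ 2‖ ≤ (q : ℝ) ^ (-(2 * m))} := rfl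
    rw [this]
    exact ((isClosed_le (by fun_prop) continuous_const).inter
      (isClosed_le (by fun_prop) continuous_const)).measurableSet
  -- finiteness of μ.prod μ Px
  obtain ⟨n, hn⟩ := pow_unbounded_of_one_lt
    (max ((q:ℝ)^(-(2*m))) ((max ((q:ℝ)^(-m)) ‖a‖)^2)) hq1
  have hPsub : Px ⊆ A ×ˢ qb q (n:ℤ) := by
    rintro ⟨ξ, η⟩ ⟨h1, h2⟩
    refine ⟨h1, ?_⟩
    rw [mem_qb, zpow_natCast]
    have hξ : ‖ξ‖ ≤ max ((q:ℝ)^(-m)) ‖a‖ := by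
      have : ξ = (ξ - a) + a := by ring
      rw [this]
      exact le_trans (Padic.nonarchimedean _ _) (max_le_max h1 le_rfl)
    have hη : ‖η‖ ≤ max ((q:ℝ)^(-(2*m))) (‖ξ‖^2) := by
      have heq : η = (η - ξ^2) + ξ^2 := by ring
      rw [heq]
      refine le_trans (Padic.nonarchimedean _ _) (max_le_max h2 ?_)
      rw [norm_pow]
    refine le_of_lt (lt_of_le_of_lt ?_ hn)
    refine le_trans hη (max_le_max le_rfl ?_)
    exact pow_le_pow_left₀ (norm_nonneg ξ) hξ 2
  have hmuA : μ A = μ (qb q (-m)) := measure_qb_shift μ a (-m)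
  have hPfin : (μ.prod μ) Px < ⊤ := by
    calc (μ.prod μ) Px ≤ (μ.prod μ) (A ×ˢ qb q (n:ℤ)) := measure_mono hPsub
      _ = μ A * μ (qb q (n:ℤ)) := Measure.prod_prod A (qb q (n:ℤ))
      _ < ⊤ := by
          rw [hmuA]
          exact ENNReal.mul_lt_top
            (measure_qb_ne_top μ hμ (-m)).lt_top (measure_qb_ne_top μ hμ (n:ℤ)).lt_top
  have hint : IntegrableOn f Px (μ.prod μ) := by
    refine Integrable.mono' (g := fun _ => (1:ℝ)) (integrableOn_const hPfin.ne)
      hf_cont.aestronglyMeasurable.restrict ?_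
    exact Filter.Eventually.of_forall fun p => le_of_eq (hχ_norm _)
  rw [← integral_indicator hPmeas,
    integral_prod _ ((integrable_indicator_iff hPmeas).2 hint)]
  -- the v-integral
  set Iv : ℂ := ∫ v in qb q (-(2*m)), χ (v * y) ∂μ with hIvdef
  -- inner integral computation
  have hinner : ∀ ξ : ℚ_[q], (∫ η, Set.indicator Px f (ξ, η) ∂μ)
      = Set.indicator A (fun ξ' => χ (ξ' * x + ξ'^2 * y) * Iv) ξ := by
    intro ξ
    by_cases hξ : ξ ∈ A
    · have hfe : (fun η => Set.indicator Px f (ξ, η))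
          = fun η => Set.indicator {η' : ℚ_[q] | ‖η' - ξ^2‖ ≤ (q:ℝ)^(-(2*m))}
              (fun η' => χ (ξ * x + η' * y)) η := by
        funext η
        by_cases hη : ‖η - ξ^2‖ ≤ (q:ℝ)^(-(2*m))
        · rw [Set.indicator_of_mem (show (ξ,η) ∈ Px from ⟨hξ, hη⟩),
            Set.indicator_of_mem (show η ∈ {η' : ℚ_[q] | ‖η' - ξ^2‖ ≤ (q:ℝ)^(-(2*m))} from hη)]
        · rw [Set.indicator_of_notMem (show (ξ,η) ∉ Px from fun hc => hη hc.2),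
            Set.indicator_of_notMem (show η ∉ {η' : ℚ_[q] | ‖η' - ξ^2‖ ≤ (q:ℝ)^(-(2*m))} from hη)]
      rw [hfe, integral_indicator
        ((isClosed_le (by fun_prop) continuous_const).measurableSet),
        setIntegral_qb_shift μ _ (ξ^2) (-(2*m)), Set.indicator_of_mem hξ]
      have hfe2 : (fun v : ℚ_[q] => χ (ξ * x + (v + ξ^2) * y))
          = fun v : ℚ_[q] => χ (ξ * x + ξ^2 * y) * χ (v * y) := by
        funext v
        rw [← hχ_mul]
        congr 1
        ring
      rw [hfe2, integral_const_mul]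
    · have hfe : (fun η => Set.indicator Px f (ξ, η)) = fun _ => (0:ℂ) := by
        funext η
        exact Set.indicator_of_notMem (fun hc => hξ hc.1) f
      rw [hfe, integral_zero, Set.indicator_of_notMem hξ]
  rw [integral_congr_ae (Filter.Eventually.of_forall hinner), integral_indicator hAmeas]
  -- now case on ‖y‖
  by_cases hy : ‖y‖ ≤ (q:ℝ)^(2*m)
  · have hIv : Iv = (((q:ℝ)^(-(2*m)) : ℝ) : ℂ) := by
      rw [hIvdef]
      apply integral_char_qb_of_le μ χ hμ hχ_triv (-(2*m)) y
      rwa [neg_neg]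
    have hshift : ∫ ξ in A, χ (ξ * x + ξ^2 * y) * Iv ∂μ
        = (∫ u in qb q (-m), χ ((u + a) * x + (u + a)^2 * y) ∂μ) * Iv := by
      rw [← integral_mul_const]
      exact setIntegral_qb_shift μ (fun ξ => χ (ξ * x + ξ^2 * y) * Iv) a (-m)
    rw [hshift]
    have hfe3 : ∀ u ∈ qb q (-m), χ ((u + a) * x + (u + a)^2 * y)
        = χ (a * x + a^2 * y) * χ (u * (x + 2*a*y)) := by
      intro u hu
      have hsplit : χ ((u + a) * x + (u + a)^2 * y)
          = χ (a * x + a^2 * y) * (χ (u * (x + 2*a*y)) * χ (u^2 * y)) := by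
        rw [← hχ_mul, ← hχ_mul]
        congr 1
        ring
      have hone : χ (u^2 * y) = 1 := by
        apply hχ_triv
        rw [norm_mul, norm_pow]
        calc ‖u‖^2 * ‖y‖ ≤ ((q:ℝ)^(-m))^2 * (q:ℝ)^(2*m) := by
              apply mul_le_mul (pow_le_pow_left₀ (norm_nonneg u) hu 2) hy (norm_nonneg y)
                (by positivity)
          _ = 1 := by
              rw [← zpow_natCast ((q:ℝ)^(-m)) 2, ← zpow_mul, ← zpow_add₀ qne,
                show (-m * ((2:ℕ):ℤ) + 2*m : ℤ) = 0 by push_cast; ring, zpow_zero]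
      rw [hsplit, hone, mul_one]
    rw [setIntegral_congr_fun (measurableSet_qb (-m)) hfe3, integral_const_mul]
    by_cases hx1 : ‖x + 2*a*y‖ ≤ (q:ℝ)^m
    · have hIx : ∫ u in qb q (-m), χ (u * (x + 2*a*y)) ∂μ = (((q:ℝ)^(-m) : ℝ) : ℂ) := by
        apply integral_char_qb_of_le μ χ hμ hχ_triv (-m) _
        rwa [neg_neg]
      rw [hIx, hIv, Set.indicator_of_mem (show ((x,y) : ℚ_[q] × ℚ_[q]) ∈
        {w : ℚ_[q] × ℚ_[q] | ‖w.1 + 2 * a * w.2‖ ≤ (q : ℝ) ^ m ∧ ‖w.2‖ ≤ (q : ℝ) ^ (2 * m)}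
        from ⟨hx1, hy⟩)]
      have hqC : (q:ℂ) ≠ 0 := by
        simp only [ne_eq, Nat.cast_eq_zero]
        exact (Fact.out : q.Prime).ne_zero
      rw [mul_one]
      push_cast
      rw [mul_assoc, ← zpow_add₀ hqC, show (-m + -(2*m) : ℤ) = -(3*m) by ring, mul_comm]
    · have hIx : ∫ u in qb q (-m), χ (u * (x + 2*a*y)) ∂μ = 0 := by
        apply integral_char_qb_of_not μ χ hχ_mul hχ_triv hχ_nontriv (-m) _
        rwa [neg_neg]
      rw [hIx, Set.indicator_of_notMem (show ((x,y) : ℚ_[q] × ℚ_[q]) ∉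
        {w : ℚ_[q] × ℚ_[q] | ‖w.1 + 2 * a * w.2‖ ≤ (q : ℝ) ^ m ∧ ‖w.2‖ ≤ (q : ℝ) ^ (2 * m)}
        from fun hc => hx1 hc.1)]
      simp
  · have hIv : Iv = 0 := by
      rw [hIvdef]
      apply integral_char_qb_of_not μ χ hχ_mul hχ_triv hχ_nontriv (-(2*m)) y
      rwa [neg_neg]
    rw [hIv]
    rw [Set.indicator_of_notMem (show ((x,y) : ℚ_[q] × ℚ_[q]) ∉
      {w : ℚ_[q] × ℚ_[q] | ‖w.1 + 2 * a * w.2‖ ≤ (q : ℝ) ^ m ∧ ‖w.2‖ ≤ (q : ℝ) ^ (2 * m)}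
      from fun hc => hy hc.2)]
    simp
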